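/- (Monotonicity of the rejection probability, from the proof of Theorem 6 of the paper.) In the finite-sample Bernoulli testing framework, fix j ∈ {1, …, n} and fix p_i ∈ [0,1] for every i ≠ j. The map s ↦ Σ_{y ∈ {0,1}^n} φ̄(y)·s^{y_j}·(1 − s)^{1−y_j}·Π_{i ≠ j} p_i^{y_i}·(1 − p_i)^{1−y_i} on [0,1] is nondecreasing if p̃_j > 1/2, nonincreasing if p̃_j < 1/2, and constant if p̃_j = 1/2. -/

import Mathlib

/-- Likelihood of the binary outcome vector `y` under Bernoulli probabilities `p`. -/
def lik {n : ℕ} (p : Fin n → ℝ) (y : Fin n → Bool) : ℝ :=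
  ∏ i, if y i then p i else 1 - p i

/-- Rejection probability of the (possibly randomized) test `φ` under `p`. -/
def rejProb {n : ℕ} (φ : (Fin n → Bool) → ℝ) (p : Fin n → ℝ) : ℝ :=
  ∑ y : Fin n → Bool, φ y * lik p y

/-- The set `N(b)` of Bernoulli probability vectors compatible with the null `β = b`. -/
def nullSet {n K : ℕ} (X : Fin n → Fin K → ℝ) (b : Fin K → ℝ) : Set (Fin n → ℝ) :=
  {p | (∀ i, p i ∈ Set.Icc (0 : ℝ) 1) ∧
    ∀ i, (0 ≤ (∑ j, X i j * b j) → 1/2 ≤ p i) ∧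
         ((∑ j, X i j * b j) ≤ 0 → p i ≤ 1/2)}

/-- The least favorable null probabilities `p̄` paired with alternative `p̃`. -/
noncomputable def pbar {n K : ℕ} (X : Fin n → Fin K → ℝ) (b : Fin K → ℝ)
    (pt : Fin n → ℝ) : Fin n → ℝ :=
  fun i => if (∑ j, X i j * b j) * (pt i - 1/2) < 0 ∨
      ((∑ j, X i j * b j) = 0 ∧ pt i < 1/2) then 1/2 else pt i

/-- The likelihood ratio test `φ̄` of `p̄` against `p̃`, with constant `k` and
randomization `ξ`. -/
noncomputable def lrt {n : ℕ} (pt pb : Fin n → ℝ) (k ξ : ℝ)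
    (y : Fin n → Bool) : ℝ :=
  if k * lik pb y < lik pt y then 1
  else if lik pt y = k * lik pb y then ξ else 0


lemma key_le {a a' bq bq' Rb Rt k : ℝ} (hsa : a + a' = 1) (hsb : bq + bq' = 1)
    (ha0 : 0 < a) (ha'0 : 0 < a') (hb0 : 0 ≤ bq) (hba : bq ≤ a)
    (hk : 0 ≤ k) (hRb : 0 ≤ Rb) (h : k * (bq' * Rb) ≤ a' * Rt) :
    k * (bq * Rb) ≤ a * Rt := by
  have h4 : a * (k * (bq' * Rb)) ≤ a * (a' * Rt) := mul_le_mul_of_nonneg_left h ha0.le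
  have h3 : 0 ≤ a * bq' - bq * a' := by nlinarith
  have h5 : 0 ≤ (k * Rb) * (a * bq' - bq * a') := mul_nonneg (mul_nonneg hk hRb) h3
  nlinarith [h4, h5, ha'0]

lemma key_lt {a a' bq bq' Rb Rt k : ℝ} (hsa : a + a' = 1) (hsb : bq + bq' = 1)
    (ha0 : 0 < a) (ha'0 : 0 < a') (hb0 : 0 ≤ bq) (hba : bq ≤ a)
    (hk : 0 ≤ k) (hRb : 0 ≤ Rb) (h : k * (bq' * Rb) < a' * Rt) :
    k * (bq * Rb) < a * Rt := by
  have h4 : a * (k * (bq' * Rb)) < a * (a' * Rt) := mul_lt_mul_of_pos_left h ha0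
  have h3 : 0 ≤ a * bq' - bq * a' := by nlinarith
  have h5 : 0 ≤ (k * Rb) * (a * bq' - bq * a') := mul_nonneg (mul_nonneg hk hRb) h3
  nlinarith [h4, h5, ha'0]

lemma lik_update {n : ℕ} (q : Fin n → ℝ) (j : Fin n) (y : Fin n → Bool) (c : Bool) :
    lik q (Function.update y j c) =
      (if c then q j else 1 - q j) *
        ∏ i ∈ Finset.univ.erase j, (if y i then q i else 1 - q i) := by
  unfold lik
  rw [← Finset.mul_prod_erase _ _ (Finset.mem_univ j), Function.update_self]
  congr 1
  refine Finset.prod_congr rfl fun i hi => ?_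
  rw [Function.update_of_ne (Finset.ne_of_mem_erase hi)]

lemma prod_pos_of_Ioo {n : ℕ} (q : Fin n → ℝ) (hq : ∀ i, q i ∈ Set.Ioo (0:ℝ) 1)
    (j : Fin n) (y : Fin n → Bool) :
    0 < ∏ i ∈ Finset.univ.erase j, (if y i then q i else 1 - q i) := by
  refine Finset.prod_pos fun i _ => ?_
  by_cases h : y i
  · simp [h]; exact (hq i).1
  · simp [h]; linarith [(hq i).2]

lemma lrt_mono {n : ℕ} (pt pb : Fin n → ℝ)
    (hpt : ∀ i, pt i ∈ Set.Ioo (0:ℝ) 1) (hpb : ∀ i, pb i ∈ Set.Ioo (0:ℝ) 1)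
    (k ξ : ℝ) (hk : 0 ≤ k) (hξ : ξ ∈ Set.Icc (0:ℝ) 1)
    (j : Fin n) (hba : pb j ≤ pt j) (y : Fin n → Bool) :
    lrt pt pb k ξ (Function.update y j false) ≤ lrt pt pb k ξ (Function.update y j true) := by
  set Rt := ∏ i ∈ Finset.univ.erase j, (if y i then pt i else 1 - pt i) with hRtdef
  set Rb := ∏ i ∈ Finset.univ.erase j, (if y i then pb i else 1 - pb i) with hRbdef
  have hRb : 0 ≤ Rb := (prod_pos_of_Ioo pb hpb j y).le
  have e1 : lik pt (Function.update y j true) = pt j * Rt := by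
    rw [lik_update]; simp; exact Or.inl rfl
  have e2 : lik pt (Function.update y j false) = (1 - pt j) * Rt := by
    rw [lik_update]; simp; exact Or.inl rfl
  have e3 : lik pb (Function.update y j true) = pb j * Rb := by
    rw [lik_update]; simp; exact Or.inl rfl
  have e4 : lik pb (Function.update y j false) = (1 - pb j) * Rb := by
    rw [lik_update]; simp; exact Or.inl rfl
  have Hs : k * ((1 - pb j) * Rb) < (1 - pt j) * Rt → k * (pb j * Rb) < pt j * Rt :=
    fun h => key_lt (by ring) (by ring) (hpt j).1 (by linarith [(hpt j).2]) (hpb j).1.le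
      hba hk hRb h
  have Hw : k * ((1 - pb j) * Rb) ≤ (1 - pt j) * Rt → k * (pb j * Rb) ≤ pt j * Rt :=
    fun h => key_le (by ring) (by ring) (hpt j).1 (by linarith [(hpt j).2]) (hpb j).1.le
      hba hk hRb h
  unfold lrt
  rw [e1, e2, e3, e4]
  split_ifs with h1 h2 h3 h4 h5 h6 h7
  any_goals linarith [hξ.1, hξ.2]
  · exact absurd (Hs h1) h2
  · exact absurd (Hs h1) h2
  · exact absurd (le_antisymm (not_lt.mp h5) (Hw h4.symm.le)) h6

lemma lrt_anti {n : ℕ} (pt pb : Fin n → ℝ)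
    (hpt : ∀ i, pt i ∈ Set.Ioo (0:ℝ) 1) (hpb : ∀ i, pb i ∈ Set.Ioo (0:ℝ) 1)
    (k ξ : ℝ) (hk : 0 ≤ k) (hξ : ξ ∈ Set.Icc (0:ℝ) 1)
    (j : Fin n) (hba : pt j ≤ pb j) (y : Fin n → Bool) :
    lrt pt pb k ξ (Function.update y j true) ≤ lrt pt pb k ξ (Function.update y j false) := by
  set Rt := ∏ i ∈ Finset.univ.erase j, (if y i then pt i else 1 - pt i) with hRtdef
  set Rb := ∏ i ∈ Finset.univ.erase j, (if y i then pb i else 1 - pb i) with hRbdef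
  have hRb : 0 ≤ Rb := (prod_pos_of_Ioo pb hpb j y).le
  have e1 : lik pt (Function.update y j true) = pt j * Rt := by
    rw [lik_update]; simp; exact Or.inl rfl
  have e2 : lik pt (Function.update y j false) = (1 - pt j) * Rt := by
    rw [lik_update]; simp; exact Or.inl rfl
  have e3 : lik pb (Function.update y j true) = pb j * Rb := by
    rw [lik_update]; simp; exact Or.inl rfl
  have e4 : lik pb (Function.update y j false) = (1 - pb j) * Rb := by
    rw [lik_update]; simp; exact Or.inl rfl
  have Hs : k * (pb j * Rb) < pt j * Rt → k * ((1 - pb j) * Rb) < (1 - pt j) * Rt :=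
    fun h => key_lt (a := 1 - pt j) (a' := pt j) (bq := 1 - pb j) (bq' := pb j)
      (by ring) (by ring) (by linarith [(hpt j).2]) (hpt j).1
      (by linarith [(hpb j).2]) (by linarith) hk hRb h
  have Hw : k * (pb j * Rb) ≤ pt j * Rt → k * ((1 - pb j) * Rb) ≤ (1 - pt j) * Rt :=
    fun h => key_le (a := 1 - pt j) (a' := pt j) (bq := 1 - pb j) (bq' := pb j)
      (by ring) (by ring) (by linarith [(hpt j).2]) (hpt j).1
      (by linarith [(hpb j).2]) (by linarith) hk hRb h
  unfold lrt
  rw [e1, e2, e3, e4]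
  split_ifs with h1 h2 h3 h4 h5 h6 h7
  any_goals linarith [hξ.1, hξ.2]
  · exact absurd (Hs h1) h2
  · exact absurd (Hs h1) h2
  · exact absurd (le_antisymm (not_lt.mp h5) (Hw h4.symm.le)) h6

lemma D_nonneg {n : ℕ} (φ P : (Fin n → Bool) → ℝ) (j : Fin n)
    (hPupd : ∀ y c, P (Function.update y j c) = P y) (hP0 : ∀ y, 0 ≤ P y)
    (hφ : ∀ y, φ (Function.update y j false) ≤ φ (Function.update y j true)) :
    0 ≤ ∑ y : Fin n → Bool, (if y j then (1:ℝ) else -1) * (φ y * P y) := by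
  set f : (Fin n → Bool) → ℝ := fun y => (if y j then (1:ℝ) else -1) * (φ y * P y) with hf
  have hinv : Function.Involutive (fun y : Fin n → Bool => Function.update y j (!y j)) := by
    intro y; funext i
    rcases eq_or_ne i j with rfl | h
    · simp
    · simp [Function.update_of_ne h]
  have hsum : ∑ y : Fin n → Bool, f (Function.update y j (!y j)) = ∑ y : Fin n → Bool, f y := by
    have := Equiv.sum_comp hinv.toPerm f
    simpa [Function.Involutive.coe_toPerm] using this
  have h2 : 2 * (∑ y : Fin n → Bool, f y)
      = ∑ y : Fin n → Bool, (f y + f (Function.update y j (!y j))) := by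
    rw [Finset.sum_add_distrib, hsum]; ring
  have hterm : ∀ y : Fin n → Bool, f y + f (Function.update y j (!y j))
      = (φ (Function.update y j true) - φ (Function.update y j false)) * P y := by
    intro y
    have hPf := hPupd y false
    have hPt := hPupd y true
    by_cases h : y j = true
    · have hyt : Function.update y j true = y := by rw [← h]; exact Function.update_eq_self j y
      simp only [hf, h, Bool.not_true, if_true, Function.update_self, if_false, hyt, hPf, reduceIte]
      norm_num
      ring
    · have h' : y j = false := by simpa using h
      have hyf : Function.update y j false = y := by rw [← h']; exact Function.update_eq_self j y
      simp only [hf, h', Bool.not_false, if_true, Function.update_self, if_false, hyf, hPt, reduceIte]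
      norm_num
      ring
  have hnn : 0 ≤ ∑ y : Fin n → Bool, (f y + f (Function.update y j (!y j))) := by
    refine Finset.sum_nonneg fun y _ => ?_
    rw [hterm y]
    exact mul_nonneg (sub_nonneg.2 (hφ y)) (hP0 y)
  linarith [h2 ▸ hnn]


/-- Monotonicity of the rejection probability in each null coordinate, from the proof
of Theorem 6: the map `s ↦ Σ_y φ̄(y)·s^{y_j}(1−s)^{1−y_j}·Π_{i≠j} p_i^{y_i}(1−p_i)^{1−y_i}`
on `[0,1]` is nondecreasing if `p̃_j > 1/2`, nonincreasing if `p̃_j < 1/2`, and constant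
if `p̃_j = 1/2`. -/
theorem theorem6_monotone_step
    {n K : ℕ} (hn : 1 ≤ n)
    (X : Fin n → Fin K → ℝ) (b : Fin K → ℝ)
    (pt : Fin n → ℝ) (hpt : ∀ i, pt i ∈ Set.Ioo (0 : ℝ) 1)
    (α : ℝ) (hα : α ∈ Set.Ioo (0 : ℝ) 1)
    (k ξ : ℝ) (hk : 0 ≤ k) (hξ : ξ ∈ Set.Icc (0 : ℝ) 1)
    (j : Fin n) (p : Fin n → ℝ) (hp : ∀ i, i ≠ j → p i ∈ Set.Icc (0 : ℝ) 1)
    (F : ℝ → ℝ)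
    (hF : ∀ s, F s = ∑ y : Fin n → Bool,
      lrt pt (pbar X b pt) k ξ y * (if y j then s else 1 - s) *
        ∏ i ∈ Finset.univ.erase j, (if y i then p i else 1 - p i)) :
    (1/2 < pt j → MonotoneOn F (Set.Icc (0 : ℝ) 1)) ∧
    (pt j < 1/2 → AntitoneOn F (Set.Icc (0 : ℝ) 1)) ∧
    (pt j = 1/2 → ∀ s ∈ Set.Icc (0 : ℝ) 1, ∀ s' ∈ Set.Icc (0 : ℝ) 1, F s = F s') := by
  set pb : Fin n → ℝ := pbar X b pt with hpbdef
  have hpb : ∀ i, pb i ∈ Set.Ioo (0:ℝ) 1 := by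
    intro i
    rw [hpbdef]
    unfold pbar
    split_ifs with h
    · constructor <;> norm_num
    · exact hpt i
  have hcase : pb j = 1/2 ∨ pb j = pt j := by
    rw [hpbdef]; unfold pbar; split_ifs with h
    exacts [Or.inl rfl, Or.inr rfl]
  set φ : (Fin n → Bool) → ℝ := lrt pt pb k ξ with hφdef
  set P : (Fin n → Bool) → ℝ :=
    fun y => ∏ i ∈ Finset.univ.erase j, (if y i then p i else 1 - p i) with hPdef
  have hPupd : ∀ (y : Fin n → Bool) (c : Bool), P (Function.update y j c) = P y := by
    intro y c
    refine Finset.prod_congr rfl fun i hi => ?_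
    rw [Function.update_of_ne (Finset.ne_of_mem_erase hi)]
  have hP0 : ∀ y, 0 ≤ P y := by
    intro y
    refine Finset.prod_nonneg fun i hi => ?_
    have hpi := hp i (Finset.ne_of_mem_erase hi)
    by_cases h : y i
    · simp [h]; exact hpi.1
    · simp [h]; linarith [hpi.2]
  set D : ℝ := ∑ y : Fin n → Bool, (if y j then (1:ℝ) else -1) * (φ y * P y) with hDdef
  have hFdiff : ∀ s t : ℝ, F t - F s = (t - s) * D := by
    intro s t
    rw [hF, hF, ← Finset.sum_sub_distrib, hDdef, Finset.mul_sum]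
    refine Finset.sum_congr rfl fun y _ => ?_
    split_ifs with h <;> ring
  refine ⟨?_, ?_, ?_⟩
  · intro hhalf
    have hba : pb j ≤ pt j := by
      rcases hcase with h | h
      · rw [h]; linarith
      · rw [h]
    have hD : 0 ≤ D :=
      D_nonneg φ P j hPupd hP0 (fun y => lrt_mono pt pb hpt hpb k ξ hk hξ j hba y)
    intro s _ t _ hst
    have := hFdiff s t
    nlinarith [mul_nonneg (sub_nonneg.2 hst) hD]
  · intro hhalf
    have hba : pt j ≤ pb j := by
      rcases hcase with h | h
      · rw [h]; linarith
      · rw [h]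
    have hD : 0 ≤ -D := by
      have := D_nonneg (fun y => -φ y) P j hPupd hP0
        (fun y => by simpa using lrt_anti pt pb hpt hpb k ξ hk hξ j hba y)
      rw [hDdef]
      rw [← Finset.sum_neg_distrib]
      refine le_of_le_of_eq this (Finset.sum_congr rfl fun y _ => by ring)
    intro s _ t _ hst
    have := hFdiff s t
    nlinarith [mul_nonneg (sub_nonneg.2 hst) hD]
  · intro hhalf
    have hbj : pb j = pt j := by
      rw [hpbdef]; unfold pbar
      split_ifs with h
      · rcases h with h | h
        · rw [hhalf] at h; norm_num at h
        · rw [hhalf] at h; norm_num at h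
      · rfl
    have hD1 : 0 ≤ D :=
      D_nonneg φ P j hPupd hP0
        (fun y => lrt_mono pt pb hpt hpb k ξ hk hξ j hbj.le y)
    have hD2 : 0 ≤ -D := by
      have := D_nonneg (fun y => -φ y) P j hPupd hP0
        (fun y => by simpa using lrt_anti pt pb hpt hpb k ξ hk hξ j hbj.ge y)
      rw [hDdef, ← Finset.sum_neg_distrib]
      refine le_of_le_of_eq this (Finset.sum_congr rfl fun y _ => by ring)
    intro s _ s' _
    have := hFdiff s s'
    have hD0 : D = 0 := by linarith
    rw [hD0] at this
    linarith
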